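/- For every integer n ≥ 2, one has Γ(1+2n) · Γ(1+n/2)² ≥ 2^n · Γ(1+n)² · Γ(1+(2n−1)/2)^{2n/(2n−1)}, where Γ denotes the Euler Gamma function. -/

import Mathlib

open Real

lemma two_binom (a : ℝ) (ha : 0 ≤ a) (k : ℕ) :
    2 + 2 * k * a + (k * (k - 1) : ℝ) * a ^ 2 ≤ 2 * (1 + a) ^ k := by
  induction k with
  | zero => norm_num
  | succ k ih =>
      have h1 : (0:ℝ) ≤ (1 + a) ^ k := by positivity
      have hk : (0:ℝ) ≤ (k:ℝ) * ((k:ℝ) - 1) := by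
        rcases Nat.eq_zero_or_pos k with h | h
        · simp [h]
        · have : (1:ℝ) ≤ k := by exact_mod_cast h
          nlinarith
      push_cast
      push_cast at ih
      calc 2 + 2 * ((k:ℝ) + 1) * a + (((k:ℝ) + 1) * (((k:ℝ) + 1) - 1)) * a ^ 2
          ≤ (2 + 2 * k * a + ((k:ℝ) * ((k:ℝ) - 1)) * a ^ 2) * (1 + a) := by
            nlinarith [mul_nonneg hk (pow_nonneg ha 3)]
        _ ≤ 2 * (1 + a) ^ k * (1 + a) := by nlinarith
        _ = 2 * (1 + a) ^ (k + 1) := by ring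

lemma Gamma_three_half : Real.Gamma (3/2) = (1/2) * √π := by
  rw [show (3/2:ℝ) = 1/2 + 1 by norm_num, Real.Gamma_add_one (by norm_num),
    Real.Gamma_one_half_eq]

lemma Gamma_five_half : Real.Gamma (5/2) = (3/4) * √π := by
  rw [show (5/2:ℝ) = 3/2 + 1 by norm_num, Real.Gamma_add_one (by norm_num),
    Gamma_three_half]; ring

lemma Gamma_seven_half : Real.Gamma (7/2) = (15/8) * √π := by
  rw [show (7/2:ℝ) = 5/2 + 1 by norm_num, Real.Gamma_add_one (by norm_num),
    Gamma_five_half]; ring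

lemma Gamma_nine_half : Real.Gamma (9/2) = (105/16) * √π := by
  rw [show (9/2:ℝ) = 7/2 + 1 by norm_num, Real.Gamma_add_one (by norm_num),
    Gamma_seven_half]; ring

lemma Gamma_eleven_half : Real.Gamma (11/2) = (945/32) * √π := by
  rw [show (11/2:ℝ) = 9/2 + 1 by norm_num, Real.Gamma_add_one (by norm_num),
    Gamma_nine_half]; ring
lemma sqrt_pi_sq : √π ^ 2 = π := Real.sq_sqrt pi_pos.le

lemma gamma_half_sq_le (m : ℕ) (hm : 5 ≤ m) :
    Real.Gamma ((m:ℝ) + 1/2) ^ 2 ≤ ((m:ℝ)/2) ^ (2*m - 1) := by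
  induction m, hm using Nat.le_induction with
  | base =>
      rw [show ((5:ℕ):ℝ) + 1/2 = 11/2 by norm_num, Gamma_eleven_half]
      have h := sqrt_pi_sq
      have := pi_lt_d2
      norm_num
      nlinarith [Real.sqrt_nonneg π]
  | succ m hm ih =>
      push_cast
      have hm5 : (5:ℝ) ≤ m := by exact_mod_cast hm
      have hmpos : (0:ℝ) < m := by linarith
      have hrec : Real.Gamma (((m:ℝ) + 1) + 1/2) = ((m:ℝ) + 1/2) * Real.Gamma ((m:ℝ) + 1/2) := by
        rw [show ((m:ℝ) + 1) + 1/2 = ((m:ℝ) + 1/2) + 1 by ring, Real.Gamma_add_one (by positivity)]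
      have hexp : 2 * (m + 1) - 1 = (2*m - 1) + 2 := by omega
      have hbin := two_binom (1/(m:ℝ)) (by positivity) (2*m - 1)
      have hcast : ((2*m - 1 : ℕ):ℝ) = 2*(m:ℝ) - 1 := by
        have : 1 ≤ 2*m := by omega
        push_cast [this]; ring
      rw [hcast] at hbin
      have hB : (5 - 4/(m:ℝ) + 1/(m:ℝ)^2) ≤ (1 + 1/(m:ℝ)) ^ (2*m - 1) := by
        have heq : 2 + 2 * (2*(m:ℝ) - 1) * (1/m) + (2*(m:ℝ)-1) * ((2*(m:ℝ)-1) - 1) * (1/m)^2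
            = 2 * (5 - 4/(m:ℝ) + 1/(m:ℝ)^2) := by field_simp; ring
        rw [heq] at hbin; linarith
      have hfact : ((m:ℝ) + 1/2)^2 * ((m:ℝ)/2) ^ (2*m - 1) ≤ (((m:ℝ)+1)/2) ^ (2*(m+1) - 1) := by
        have hb : ((m:ℝ)/2) * (1 + 1/(m:ℝ)) = ((m:ℝ)+1)/2 := by field_simp
        have h1 : (((m:ℝ)+1)/2) ^ (2*(m+1) - 1)
            = (((m:ℝ)+1)/2)^2 * (((m:ℝ)/2) ^ (2*m-1) * (1 + 1/(m:ℝ)) ^ (2*m - 1)) := by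
          rw [hexp, pow_add, ← mul_pow, hb]; ring
        rw [h1]
        have hp : (0:ℝ) ≤ ((m:ℝ)/2) ^ (2*m-1) := by positivity
        have hinv : 1/(m:ℝ) ≤ 1/5 := by
          rw [div_le_div_iff₀ hmpos (by norm_num)]; linarith
        have h2 : ((m:ℝ) + 1/2)^2 ≤ (((m:ℝ)+1)/2)^2 * (5 - 4/(m:ℝ) + 1/(m:ℝ)^2) := by
          have hi2 : (0:ℝ) ≤ 1/(m:ℝ)^2 := by positivity
          have h21 : (21/5:ℝ) ≤ 5 - 4/(m:ℝ) + 1/(m:ℝ)^2 := by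
            have : 4/(m:ℝ) ≤ 4/5 := by
              rw [div_le_div_iff₀ hmpos (by norm_num)]; linarith
            linarith
          nlinarith [mul_le_mul_of_nonneg_left h21 (sq_nonneg (((m:ℝ)+1)/2)), sq_nonneg ((m:ℝ)+1), hm5]
        calc ((m:ℝ) + 1/2)^2 * ((m:ℝ)/2) ^ (2*m - 1)
            ≤ ((((m:ℝ)+1)/2)^2 * (5 - 4/(m:ℝ) + 1/(m:ℝ)^2)) * ((m:ℝ)/2) ^ (2*m - 1) :=
              mul_le_mul_of_nonneg_right h2 hp
          _ ≤ (((m:ℝ)+1)/2)^2 * (((m:ℝ)/2) ^ (2*m-1) * (1 + 1/(m:ℝ)) ^ (2*m - 1)) := by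
              nlinarith [mul_le_mul_of_nonneg_right hB hp, sq_nonneg (((m:ℝ)+1)/2)]
      calc Real.Gamma (((m:ℝ)+1) + 1/2) ^ 2 = ((m:ℝ)+1/2)^2 * Real.Gamma ((m:ℝ)+1/2)^2 := by
            rw [hrec]; ring
        _ ≤ ((m:ℝ)+1/2)^2 * ((m:ℝ)/2) ^ (2*m - 1) :=
            mul_le_mul_of_nonneg_left ih (by positivity)
        _ ≤ (((m:ℝ)+1)/2) ^ (2*(m+1) - 1) := hfact
lemma key_ineq (n : ℕ) (hn : 2 ≤ n) :
    Real.Gamma ((n:ℝ)/2 + 1/2) ^ (2*n - 1) * Real.Gamma ((n:ℝ) + 1/2)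
      ≤ Real.Gamma ((n:ℝ)/2 + 1) ^ (2*n - 1) := by
  have hx : (0:ℝ) < n := by positivity
  set x : ℝ := (n:ℝ) with hxdef
  have hApos : 0 < Real.Gamma (x/2 + 1) := Real.Gamma_pos_of_pos (by positivity)
  have hBpos : 0 < Real.Gamma (x/2 + 1/2) := Real.Gamma_pos_of_pos (by positivity)
  have hGpos : 0 < Real.Gamma (x + 1/2) := Real.Gamma_pos_of_pos (by positivity)
  have hCpos : 0 < Real.Gamma (x/2) := Real.Gamma_pos_of_pos (by positivity)
  by_cases h5 : 5 ≤ n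
  · -- main branch
    have hG : Real.Gamma (x + 1/2) ^ 2 ≤ (x/2) ^ (2*n - 1) := gamma_half_sq_le n h5
    -- log-convexity: B² ≤ Γ(x/2) * A
    have hc := Real.convexOn_log_Gamma.2 (Set.mem_Ioi.mpr (show (0:ℝ) < x/2 by positivity))
      (Set.mem_Ioi.mpr (show (0:ℝ) < x/2 + 1 by positivity))
      (by norm_num : (0:ℝ) ≤ 1/2) (by norm_num : (0:ℝ) ≤ 1/2) (by norm_num)
    simp only [Function.comp_apply, smul_eq_mul] at hc
    rw [show (1/2:ℝ) * (x/2) + 1/2 * (x/2+1) = x/2 + 1/2 by ring] at hc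
    have hB2 : Real.Gamma (x/2 + 1/2) ^ 2 ≤ Real.Gamma (x/2) * Real.Gamma (x/2 + 1) := by
      have h2 : Real.exp (Real.log (Real.Gamma (x/2+1/2)) + Real.log (Real.Gamma (x/2+1/2)))
          ≤ Real.exp (Real.log (Real.Gamma (x/2)) + Real.log (Real.Gamma (x/2+1))) :=
        Real.exp_le_exp.mpr (by linarith)
      rwa [Real.exp_add, Real.exp_add, Real.exp_log hBpos, Real.exp_log hCpos,
        Real.exp_log hApos, ← sq] at h2
    have hAA : Real.Gamma (x/2 + 1) = (x/2) * Real.Gamma (x/2) :=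
      Real.Gamma_add_one (by positivity)
    have hxB : (x/2) * Real.Gamma (x/2 + 1/2) ^ 2 ≤ Real.Gamma (x/2 + 1) ^ 2 := by
      calc (x/2) * Real.Gamma (x/2 + 1/2) ^ 2
          ≤ (x/2) * (Real.Gamma (x/2) * Real.Gamma (x/2 + 1)) :=
            mul_le_mul_of_nonneg_left hB2 (by positivity)
        _ = Real.Gamma (x/2 + 1) ^ 2 := by rw [hAA]; ring
    -- square comparison
    have hsq : (Real.Gamma (x/2 + 1/2) ^ (2*n-1) * Real.Gamma (x + 1/2)) ^ 2
        ≤ (Real.Gamma (x/2 + 1) ^ (2*n-1)) ^ 2 := by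
      calc (Real.Gamma (x/2 + 1/2) ^ (2*n-1) * Real.Gamma (x + 1/2)) ^ 2
          = (Real.Gamma (x/2 + 1/2) ^ 2) ^ (2*n-1) * Real.Gamma (x + 1/2) ^ 2 := by ring
        _ ≤ (Real.Gamma (x/2 + 1/2) ^ 2) ^ (2*n-1) * (x/2) ^ (2*n-1) :=
            mul_le_mul_of_nonneg_left hG (by positivity)
        _ = ((x/2) * Real.Gamma (x/2 + 1/2) ^ 2) ^ (2*n-1) := by rw [mul_pow]; ring
        _ ≤ (Real.Gamma (x/2 + 1) ^ 2) ^ (2*n-1) :=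
            pow_le_pow_left₀ (by positivity) hxB _
        _ = (Real.Gamma (x/2 + 1) ^ (2*n-1)) ^ 2 := by ring
    have h1 : (0:ℝ) ≤ Real.Gamma (x/2 + 1/2) ^ (2*n-1) * Real.Gamma (x + 1/2) := by positivity
    have h2 : (0:ℝ) ≤ Real.Gamma (x/2 + 1) ^ (2*n-1) := by positivity
    exact (pow_le_pow_iff_left₀ h1 h2 two_ne_zero).mp hsq
  · -- small cases n = 2, 3, 4
    have hlt : n < 5 := by omega
    have hs0 : (0:ℝ) ≤ √π := Real.sqrt_nonneg π
    have hsq := sqrt_pi_sq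
    have hpl := pi_lt_d2
    have hpg := pi_gt_d6
    interval_cases n
    · -- n = 2
      norm_num [hxdef]
      rw [Gamma_three_half, Gamma_five_half]
      nlinarith [sq_nonneg (√π)]
    · -- n = 3
      norm_num [hxdef]
      rw [Gamma_seven_half, Gamma_five_half]
      have hexp : ((3/4:ℝ) * √π) ^ 5 = (243/1024) * π^2 * √π := by
        rw [show 5 = 2*2+1 by rfl, pow_succ, pow_mul, mul_pow, sqrt_pi_sq]; ring
      rw [hexp]
      nlinarith [Real.sqrt_pos.mpr pi_pos]
    · -- n = 4
      norm_num [hxdef]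
      rw [Gamma_nine_half, Gamma_five_half]
      have hexp : ((3/4:ℝ) * √π) ^ 7 * ((105/16) * √π) = (229635/262144) * (π^2)^2 := by
        rw [show ((3/4:ℝ) * √π) ^ 7 * ((105/16) * √π) = (229635/262144) * (√π^2)^4 by ring,
          sqrt_pi_sq]; ring
      rw [hexp]
      nlinarith [sq_nonneg π, pow_le_pow_left₀ pi_pos.le pi_lt_d2.le 2]
/-- For every integer `n ≥ 2`,
`Γ(1+2n) · Γ(1+n/2)² ≥ 2ⁿ · Γ(1+n)² · Γ(1+(2n−1)/2)^(2n/(2n−1))`. -/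
theorem gamma_four_ineq_nat (n : ℕ) (hn : 2 ≤ n) :
    Real.Gamma (1 + 2 * (n : ℝ)) * Real.Gamma (1 + (n : ℝ) / 2) ^ 2 ≥
      (2 : ℝ) ^ (n : ℝ) * Real.Gamma (1 + (n : ℝ)) ^ 2 *
        Real.Gamma (1 + (2 * (n : ℝ) - 1) / 2) ^ (2 * (n : ℝ) / (2 * (n : ℝ) - 1)) := by
  have hx2 : (2:ℝ) ≤ (n:ℝ) := by exact_mod_cast hn
  set x : ℝ := (n:ℝ) with hxdef
  have hx : (0:ℝ) < x := by linarith
  rw [ge_iff_le, show 1 + 2*x = 2*x + 1 by ring, show 1 + x/2 = x/2 + 1 by ring,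
    show 1 + x = x + 1 by ring, show 1 + (2*x - 1)/2 = x + 1/2 by ring]
  have hApos : 0 < Real.Gamma (x/2 + 1) := Real.Gamma_pos_of_pos (by positivity)
  have hBpos : 0 < Real.Gamma (x/2 + 1/2) := Real.Gamma_pos_of_pos (by positivity)
  have hGpos : 0 < Real.Gamma (x + 1/2) := Real.Gamma_pos_of_pos (by positivity)
  have hFpos : 0 < Real.Gamma (x + 1) := Real.Gamma_pos_of_pos (by positivity)
  have hπ : (0:ℝ) < √π := Real.sqrt_pos.mpr Real.pi_pos
  have hu : (0:ℝ) < (2:ℝ) ^ x := Real.rpow_pos_of_pos two_pos x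
  -- duplication formula instances
  have hd1 := Real.Gamma_mul_Gamma_add_half (x + 1/2)
  rw [show x + 1/2 + 1/2 = x + 1 by ring, show 2*(x + 1/2) = 2*x + 1 by ring,
    show 1 - (2*x + 1) = -(2*x) by ring] at hd1
  have hd2 := Real.Gamma_mul_Gamma_add_half (x/2 + 1/2)
  rw [show x/2 + 1/2 + 1/2 = x/2 + 1 by ring, show 2*(x/2 + 1/2) = x + 1 by ring,
    show 1 - (x + 1) = -x by ring] at hd2
  have hpow2 : (2:ℝ)^(-(2*x)) * ((2:ℝ)^x * (2:ℝ)^x) = 1 := by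
    rw [← Real.rpow_add two_pos x x, ← Real.rpow_add two_pos,
      show -(2*x) + (x + x) = 0 by ring, Real.rpow_zero]
  have hpow1 : (2:ℝ)^(-x) * (2:ℝ)^x = 1 := by
    rw [← Real.rpow_add two_pos, show -x + x = 0 by ring, Real.rpow_zero]
  have hA' : Real.Gamma (2*x + 1)
      = Real.Gamma (x + 1/2) * Real.Gamma (x + 1) * ((2:ℝ)^x * (2:ℝ)^x) / √π := by
    rw [eq_div_iff hπ.ne']
    linear_combination (-(((2:ℝ)^x) * ((2:ℝ)^x))) * hd1 - Real.Gamma (2*x + 1) * √π * hpow2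
  have hB' : Real.Gamma (x + 1)
      = Real.Gamma (x/2 + 1/2) * Real.Gamma (x/2 + 1) * (2:ℝ)^x / √π := by
    rw [eq_div_iff hπ.ne']
    linear_combination (-((2:ℝ)^x)) * hd2 - Real.Gamma (x + 1) * √π * hpow1
  -- key inequality in rpow form
  have hkey := key_ineq n hn
  rw [← hxdef] at hkey
  have hden : (0:ℝ) < 2*x - 1 := by linarith
  have hcast : ((2*n - 1 : ℕ):ℝ) = 2*x - 1 := by
    have h1 : 1 ≤ 2*n := by omega
    rw [hxdef]; push_cast [h1]; ring
  have h3 : Real.Gamma (x + 1/2)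
      ≤ (Real.Gamma (x/2 + 1) / Real.Gamma (x/2 + 1/2)) ^ (2*n - 1) := by
    rw [div_pow, le_div_iff₀ (pow_pos hBpos _)]
    calc Real.Gamma (x + 1/2) * Real.Gamma (x/2 + 1/2) ^ (2*n-1)
        = Real.Gamma (x/2 + 1/2) ^ (2*n-1) * Real.Gamma (x + 1/2) := by ring
      _ ≤ _ := hkey
  have h4 : Real.Gamma (x + 1/2) ^ ((2*x - 1)⁻¹)
      ≤ Real.Gamma (x/2 + 1) / Real.Gamma (x/2 + 1/2) := by
    have hq : (0:ℝ) ≤ Real.Gamma (x/2 + 1) / Real.Gamma (x/2 + 1/2) := by positivity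
    have h3' : Real.Gamma (x + 1/2)
        ≤ (Real.Gamma (x/2 + 1) / Real.Gamma (x/2 + 1/2)) ^ (((2*n - 1 : ℕ)):ℝ) := by
      rw [Real.rpow_natCast]; exact h3
    have step := Real.rpow_le_rpow hGpos.le h3' (inv_nonneg.mpr hden.le)
    rwa [← Real.rpow_mul hq, hcast, mul_inv_cancel₀ hden.ne', Real.rpow_one] at step
  have h5 : Real.Gamma (x + 1/2) ^ (2*x/(2*x - 1))
      ≤ Real.Gamma (x + 1/2) * (Real.Gamma (x/2 + 1) / Real.Gamma (x/2 + 1/2)) := by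
    rw [show 2*x/(2*x - 1) = 1 + (2*x - 1)⁻¹ by field_simp; ring,
      Real.rpow_add hGpos, Real.rpow_one]
    exact mul_le_mul_of_nonneg_left h4 hGpos.le
  calc (2:ℝ)^x * Real.Gamma (x + 1) ^ 2 * Real.Gamma (x + 1/2) ^ (2*x/(2*x - 1))
      ≤ (2:ℝ)^x * Real.Gamma (x + 1) ^ 2 *
        (Real.Gamma (x + 1/2) * (Real.Gamma (x/2 + 1) / Real.Gamma (x/2 + 1/2))) :=
        mul_le_mul_of_nonneg_left h5 (by positivity)
    _ = Real.Gamma (2*x + 1) * Real.Gamma (x/2 + 1) ^ 2 := by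
        rw [hA', hB']; field_simp
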